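/- In oriented Bernoulli percolation on L at parameter p, for all integers k, n, s ≥ 1, the probability that R_n ≥ k·s (where R_n is the right-most point of ℓ_n connected to the nonpositive part of ℓ_0) satisfies P_p(R_n ≥ k·s) ≤ H_p(s,n)^k. -/

import Mathlib

open MeasureTheory

namespace OrientedPerc

/-- Vertices of the plane; the lattice `L` consists of those with even coordinate sum. -/
abbrev Vtx := ℤ × ℤ

/-- An oriented edge is given by its base vertex and a direction:
`true` for the edge to `x + (1,1)`, `false` for the edge to `x + (-1,1)`. -/
abbrev Edge := Vtx × Bool

/-- A percolation configuration: each oriented edge is open (`true`) or closed. -/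
abbrev Config := Edge → Bool

/-- The endpoint of an oriented edge. -/
def tip (e : Edge) : Vtx := e.1 + (if e.2 then (1, 1) else (-1, 1))

/-- One open oriented step from `x` to `y`. -/
def Step (ω : Config) (x y : Vtx) : Prop :=
  ∃ b : Bool, ω (x, b) = true ∧ y = tip (x, b)

/-- `x → y`: there is an open oriented path from `x` to `y`. -/
def Conn (ω : Config) (x y : Vtx) : Prop := Relation.ReflTransGen (Step ω) x y

/-- `x → y` using only vertices in the set `S`. -/
def ConnIn (S : Set Vtx) (ω : Config) (x y : Vtx) : Prop :=
  x ∈ S ∧ Relation.ReflTransGen (fun a b => Step ω a b ∧ b ∈ S) x y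

/-- The box `[a,b] × [c,d]` intersected with the lattice `L`. -/
def box (a b c d : ℤ) : Set Vtx :=
  {v | a ≤ v.1 ∧ v.1 ≤ b ∧ c ≤ v.2 ∧ v.2 ≤ d ∧ Even (v.1 + v.2)}

/-- The box `[a,b] × [c,d]` is crossed vertically (bottom to top). -/
def CrossedVert (ω : Config) (a b c d : ℤ) : Prop :=
  ∃ x y : Vtx, x.2 = c ∧ y.2 = d ∧ ConnIn (box a b c d) ω x y

/-- The box `[a,b] × [c,d]` is crossed from left to right. -/
def CrossedLR (ω : Config) (a b c d : ℤ) : Prop :=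
  ∃ x y : Vtx, x.1 = a ∧ y.1 = b ∧ ConnIn (box a b c d) ω x y

/-- `μ` is Bernoulli oriented bond percolation with parameter `p`:
the states of edges are i.i.d., each open with probability `p`. -/
def IsBernoulli (μ : Measure Config) (p : ℝ) : Prop :=
  IsProbabilityMeasure μ ∧ p ∈ Set.Icc (0 : ℝ) 1 ∧
    ∀ (s : Finset Edge) (f : Edge → Bool),
      (μ {ω | ∀ e ∈ s, ω e = f e}).toReal = ∏ e ∈ s, (if f e then p else 1 - p)

/-- Probability of a vertical crossing of `[0,m] × [0,n]`. -/
noncomputable def V (μ : Measure Config) (m n : ℕ) : ℝ :=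
  (μ {ω | CrossedVert ω 0 (m : ℤ) 0 (n : ℤ)}).toReal

/-- Probability of a left-right crossing of `[0,m] × [0,n]`. -/
noncomputable def H (μ : Measure Config) (m n : ℕ) : ℝ :=
  (μ {ω | CrossedLR ω 0 (m : ℤ) 0 (n : ℤ)}).toReal

/-- The event `R_n ≥ t`: some `(y,0)` with `y ≤ 0` even is connected to some
`(x,n)` with `x ≥ t`. -/
def Rge (ω : Config) (n t : ℤ) : Prop :=
  ∃ x y : ℤ, Even y ∧ y ≤ 0 ∧ t ≤ x ∧ Conn ω (y, 0) (x, n)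

/-- The event `0 → ℓ_n`. -/
def ConnToLine (ω : Config) (n : ℤ) : Prop := ∃ x : ℤ, Conn ω (0, 0) (x, n)


section Aux

open Finset

/-- Indicator configuration of a finite set of edges. -/
def indC (s : Finset Edge) : Config := fun e => decide (e ∈ s)

/-- `P` only depends on the states of edges in `F`. -/
def Determines (F : Finset Edge) (P : Config → Prop) : Prop :=
  ∀ ω ω' : Config, (∀ e ∈ F, ω e = ω' e) → P ω → P ω'

lemma cylinder_meas (F : Finset Edge) (f : Config) :
    MeasurableSet {ω : Config | ∀ e ∈ F, ω e = f e} := by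
  have h : {ω : Config | ∀ e ∈ F, ω e = f e} = ⋂ e ∈ F, {ω : Config | ω e = f e} := by
    ext ω; simp
  rw [h]
  refine MeasurableSet.biInter F.countable_toSet fun e _ => ?_
  have h2 : {ω : Config | ω e = f e} = (fun ω : Config => ω e) ⁻¹' {f e} := rfl
  rw [h2]
  exact (measurable_pi_apply e) (measurableSet_singleton (f e))

open Classical in
lemma prob_determined (μ : Measure Config) (p : ℝ) (hB : IsBernoulli μ p)
    (F : Finset Edge) (P : Config → Prop) (hd : Determines F P) :
    (μ {ω | P ω}).toReal
      = ∑ s ∈ F.powerset, (if P (indC s) then ∏ e ∈ F, (if indC s e then p else 1 - p) else 0) := by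
  classical
  haveI hprob : IsProbabilityMeasure μ := hB.1
  set U : Finset (Finset Edge) := F.powerset.filter (fun s => P (indC s)) with hU
  have hset : {ω | P ω} = ⋃ s ∈ U, {ω : Config | ∀ e ∈ F, ω e = indC s e} := by
    ext ω
    simp only [Set.mem_setOf_eq, Set.mem_iUnion, hU, Finset.mem_filter, Finset.mem_powerset]
    constructor
    · intro hP
      refine ⟨F.filter (fun e => ω e = true), ⟨Finset.filter_subset _ _, ?_⟩, ?_⟩
      · refine hd ω _ ?_ hP
        intro e he
        by_cases hω : ω e = true <;> simp [indC, Finset.mem_filter, he, hω]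
      · intro e he
        by_cases hω : ω e = true <;> simp [indC, Finset.mem_filter, he, hω]
    · rintro ⟨s, ⟨hsF, hPs⟩, hag⟩
      exact hd (indC s) ω (fun e he => (hag e he).symm) hPs
  have hdisjU : (↑U : Set (Finset Edge)).PairwiseDisjoint
      (fun s => {ω : Config | ∀ e ∈ F, ω e = indC s e}) := by
    intro s hs t ht hst
    simp only [Finset.coe_filter, Set.mem_setOf_eq, hU, Finset.mem_powerset] at hs ht
    refine Set.disjoint_left.mpr ?_
    intro ω hωs hωt
    apply hst
    ext e
    by_cases he : e ∈ F
    · have h1 := hωs e he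
      have h2 := hωt e he
      simp only [indC] at h1 h2
      rw [← decide_eq_decide]
      rw [← h1, ← h2]
    · constructor <;> intro hc
      · exact absurd (hs.1 hc) he
      · exact absurd (ht.1 hc) he
  rw [hset, measure_biUnion_finset hdisjU (fun s _ => cylinder_meas F (indC s)),
    ENNReal.toReal_sum (fun s _ => measure_ne_top μ _)]
  rw [Finset.sum_filter]
  exact Finset.sum_congr rfl fun s hs => by
    split
    · exact hB.2.2 F (indC s)
    · rfl

end Aux
section Aux2

open Finset

lemma indC_agree_inter {s F G : Finset Edge} (hFG : F ⊆ G) :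
    ∀ e ∈ F, indC s e = indC (s ∩ F) e := by
  intro e he
  simp [indC, he]

open Classical in
lemma indep_two (μ : Measure Config) (p : ℝ) (hB : IsBernoulli μ p)
    {F1 F2 : Finset Edge} {P1 P2 : Config → Prop}
    (h1 : Determines F1 P1) (h2 : Determines F2 P2) (hdj : Disjoint F1 F2) :
    (μ {ω | P1 ω ∧ P2 ω}).toReal = (μ {ω | P1 ω}).toReal * (μ {ω | P2 ω}).toReal := by
  classical
  have hd : Determines (F1 ∪ F2) (fun ω => P1 ω ∧ P2 ω) := by
    rintro ω ω' hag ⟨ha, hb⟩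
    exact ⟨h1 ω ω' (fun e he => hag e (Finset.mem_union_left _ he)) ha,
           h2 ω ω' (fun e he => hag e (Finset.mem_union_right _ he)) hb⟩
  rw [prob_determined μ p hB _ _ hd, prob_determined μ p hB _ _ h1,
    prob_determined μ p hB _ _ h2, Finset.sum_mul_sum]
  rw [← Finset.sum_product']
  refine Finset.sum_nbij' (fun s => (s ∩ F1, s ∩ F2)) (fun q => q.1 ∪ q.2) ?_ ?_ ?_ ?_ ?_
  · intro s hs
    simp only [Finset.mem_product, Finset.mem_powerset]
    exact ⟨Finset.inter_subset_right, Finset.inter_subset_right⟩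
  · intro q hq
    simp only [Finset.mem_product, Finset.mem_powerset] at hq
    simp only [Finset.mem_powerset]
    exact Finset.union_subset (hq.1.trans Finset.subset_union_left)
      (hq.2.trans Finset.subset_union_right)
  · intro s hs
    simp only [Finset.mem_powerset] at hs
    show s ∩ F1 ∪ s ∩ F2 = s
    rw [← Finset.inter_union_distrib_left, Finset.inter_eq_left.mpr hs]
  · intro q hq
    simp only [Finset.mem_product, Finset.mem_powerset] at hq
    have e1 : (q.1 ∪ q.2) ∩ F1 = q.1 := by
      rw [Finset.union_inter_distrib_right, Finset.inter_eq_left.mpr hq.1,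
        Finset.disjoint_iff_inter_eq_empty.mp (Finset.disjoint_of_subset_left hq.2 hdj.symm),
        Finset.union_empty]
    have e2 : (q.1 ∪ q.2) ∩ F2 = q.2 := by
      rw [Finset.union_inter_distrib_right, Finset.inter_eq_left.mpr hq.2,
        Finset.disjoint_iff_inter_eq_empty.mp (Finset.disjoint_of_subset_left hq.1 hdj),
        Finset.empty_union]
    show ((q.1 ∪ q.2) ∩ F1, (q.1 ∪ q.2) ∩ F2) = q
    rw [e1, e2]
  · intro s hs
    simp only [Finset.mem_powerset] at hs
    have hP1 : P1 (indC s) ↔ P1 (indC (s ∩ F1)) :=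
      ⟨h1 _ _ (indC_agree_inter Finset.Subset.rfl),
       h1 _ _ (fun e he => (indC_agree_inter Finset.Subset.rfl e he).symm)⟩
    have hP2 : P2 (indC s) ↔ P2 (indC (s ∩ F2)) :=
      ⟨h2 _ _ (indC_agree_inter Finset.Subset.rfl),
       h2 _ _ (fun e he => (indC_agree_inter Finset.Subset.rfl e he).symm)⟩
    have hw : (∏ e ∈ F1 ∪ F2, (if indC s e then p else 1 - p))
        = (∏ e ∈ F1, (if indC (s ∩ F1) e then p else 1 - p))
          * (∏ e ∈ F2, (if indC (s ∩ F2) e then p else 1 - p)) := by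
      rw [Finset.prod_union hdj]
      congr 1
      · exact Finset.prod_congr rfl fun e he => by rw [indC_agree_inter Finset.Subset.rfl e he]
      · exact Finset.prod_congr rfl fun e he => by rw [indC_agree_inter Finset.Subset.rfl e he]
    by_cases hA : P1 (indC (s ∩ F1)) <;> by_cases hC : P2 (indC (s ∩ F2)) <;>
      simp [hP1, hP2, hA, hC, hw]

open Classical in
lemma prob_map (μ : Measure Config) (p : ℝ) (hB : IsBernoulli μ p)
    (F : Finset Edge) (P : Config → Prop) (hd : Determines F P)
    (τ : Edge → Edge) (hτ : Function.Injective τ) :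
    (μ {ω | P (fun e => ω (τ e))}).toReal = (μ {ω | P ω}).toReal := by
  classical
  have hd' : Determines (F.image τ) (fun ω => P (fun e => ω (τ e))) := by
    intro ω ω' hag hP
    exact hd _ _ (fun e he => hag (τ e) (Finset.mem_image_of_mem τ he)) hP
  rw [prob_determined μ p hB _ _ hd', prob_determined μ p hB _ _ hd]
  refine Finset.sum_nbij' (fun t => F.filter (fun e => τ e ∈ t)) (fun s => s.image τ) ?_ ?_ ?_ ?_ ?_
  · intro t ht
    simp only [Finset.mem_powerset]
    exact Finset.filter_subset _ _
  · intro s hs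
    simp only [Finset.mem_powerset] at hs ⊢
    exact Finset.image_subset_image hs
  · intro t ht
    simp only [Finset.mem_powerset] at ht
    ext e'
    simp only [Finset.mem_image, Finset.mem_filter]
    constructor
    · rintro ⟨e, ⟨heF, het⟩, rfl⟩
      exact het
    · intro he'
      obtain ⟨e, heF, rfl⟩ := Finset.mem_image.mp (ht he')
      exact ⟨e, ⟨heF, he'⟩, rfl⟩
  · intro s hs
    simp only [Finset.mem_powerset] at hs
    ext e
    simp only [Finset.mem_filter, Finset.mem_image]
    constructor
    · rintro ⟨heF, e', he's, he'e⟩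
      rwa [← hτ he'e]
    · intro hes
      exact ⟨hs hes, e, hes, rfl⟩
  · intro t ht
    simp only [Finset.mem_powerset] at ht
    have hag : ∀ e ∈ F, indC (F.filter (fun e => τ e ∈ t)) e = indC t (τ e) := by
      intro e he
      simp [indC, he]
    have hPiff : P (indC (F.filter (fun e => τ e ∈ t))) ↔ (fun ω => P (fun e => ω (τ e))) (indC t) :=
      ⟨hd _ _ hag, hd _ _ (fun e he => (hag e he).symm)⟩
    have hw : (∏ e ∈ F, (if indC (F.filter (fun e => τ e ∈ t)) e then p else 1 - p))
        = ∏ e' ∈ F.image τ, (if indC t e' then p else 1 - p) := by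
      rw [Finset.prod_image (fun a _ b _ h => hτ h)]
      exact Finset.prod_congr rfl fun e he => by rw [hag e he]
    by_cases hP : P (indC (F.filter (fun e => τ e ∈ t))) <;>
      simp [hP, hPiff.symm, hw, ← hPiff]

lemma indep_many (μ : Measure Config) (p : ℝ) (hB : IsBernoulli μ p)
    (P : ℕ → Config → Prop) (F : ℕ → Finset Edge)
    (hd : ∀ i, Determines (F i) (P i))
    (hdisj : ∀ i j, i < j → Disjoint (F i) (F j)) (k : ℕ) :
    (μ {ω | ∀ i < k, P i ω}).toReal = ∏ i ∈ Finset.range k, (μ {ω | P i ω}).toReal := by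
  classical
  haveI hprob : IsProbabilityMeasure μ := hB.1
  induction k with
  | zero =>
    have h0 : {ω : Config | ∀ i < 0, P i ω} = Set.univ := by ext ω; simp
    rw [h0, measure_univ, ENNReal.toReal_one, Finset.range_zero, Finset.prod_empty]
  | succ k ih =>
    have hsplit : {ω : Config | ∀ i < k + 1, P i ω}
        = {ω : Config | (∀ i < k, P i ω) ∧ P k ω} := by
      ext ω
      simp only [Set.mem_setOf_eq]
      constructor
      · intro h
        exact ⟨fun i hi => h i (by omega), h k (by omega)⟩
      · rintro ⟨h1, h2⟩ i hi
        rcases Nat.lt_succ_iff_lt_or_eq.mp hi with h | rfl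
        · exact h1 i h
        · exact h2
    have hdUnion : Determines ((Finset.range k).biUnion F) (fun ω => ∀ i < k, P i ω) := by
      intro ω ω' hag h i hi
      refine hd i ω ω' (fun e he => hag e ?_) (h i hi)
      exact Finset.mem_biUnion.mpr ⟨i, Finset.mem_range.mpr hi, he⟩
    have hdisjk : Disjoint ((Finset.range k).biUnion F) (F k) := by
      rw [Finset.disjoint_biUnion_left]
      intro i hi
      exact hdisj i k (Finset.mem_range.mp hi)
    rw [hsplit, indep_two μ p hB hdUnion (hd k) hdisjk, ih, Finset.prod_range_succ]

end Aux2
section Geo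

lemma step_facts {ω : Config} {x y : Vtx} (h : Step ω x y) :
    y.2 = x.2 + 1 ∧ (y.1 = x.1 + 1 ∨ y.1 = x.1 - 1) := by
  obtain ⟨b, -, rfl⟩ := h
  cases b <;> simp [tip] <;> omega

lemma step_even {ω : Config} {x y : Vtx} (h : Step ω x y) (hx : Even (x.1 + x.2)) :
    Even (y.1 + y.2) := by
  obtain ⟨h1, h2⟩ := step_facts h
  rw [Int.even_iff] at hx ⊢
  omega

lemma rtg_last_mem {step : Vtx → Vtx → Prop} {S : Set Vtx} {x y : Vtx}
    (h : Relation.ReflTransGen (fun u v => step u v ∧ v ∈ S) x y) (hx : x ∈ S) : y ∈ S := by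
  induction h with
  | refl => exact hx
  | tail _ h2 _ => exact h2.2

lemma conn_path {ω : Config} {a b : Vtx} (h : Conn ω a b) :
    ∃ m : ℕ, ∃ f : ℕ → Vtx, f 0 = a ∧ f m = b ∧ ∀ j < m, Step ω (f j) (f (j + 1)) := by
  induction h with
  | refl => exact ⟨0, fun _ => a, rfl, rfl, fun j hj => absurd hj (by omega)⟩
  | @tail u c hab hbc ih =>
    obtain ⟨m, f, h0, hm, hsteps⟩ := ih
    refine ⟨m + 1, fun j => if j = m + 1 then c else f j, by simp [h0], by simp, ?_⟩
    intro j hj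
    rcases Nat.lt_or_ge j m with hjm | hjm
    · have e1 : (if j = m + 1 then c else f j) = f j := if_neg (by omega)
      have e2 : (if j + 1 = m + 1 then c else f (j + 1)) = f (j + 1) := if_neg (by omega)
      show Step ω (if j = m + 1 then c else f j) (if j + 1 = m + 1 then c else f (j + 1))
      rw [e1, e2]
      exact hsteps j hjm
    · have hjeq : j = m := by omega
      subst hjeq
      have e1 : (if j = j + 1 then c else f j) = f j := if_neg (by omega)
      show Step ω (if j = j + 1 then c else f j) (if j + 1 = j + 1 then c else f (j + 1))
      rw [e1, if_pos rfl, hm]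
      exact hbc

/-- Discrete intermediate value: last visit to `L`, then first visit to `R`. -/
lemma exists_cross (g : ℕ → ℤ) (m : ℕ)
    (hstep : ∀ j < m, g (j + 1) = g j + 1 ∨ g (j + 1) = g j - 1)
    (L R : ℤ) (hLR : L ≤ R) (h0 : g 0 ≤ L) (hm : R ≤ g m) :
    ∃ a b : ℕ, a ≤ b ∧ b ≤ m ∧ g a = L ∧ g b = R ∧
      ∀ j, a ≤ j → j ≤ b → L ≤ g j ∧ g j ≤ R := by
  classical
  set A : Finset ℕ := (Finset.range (m + 1)).filter (fun j => g j ≤ L) with hA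
  have hA0 : 0 ∈ A := by simp [hA, h0]
  have hAne : A.Nonempty := ⟨0, hA0⟩
  obtain ⟨a, haA, hamax⟩ : ∃ a, a ∈ A ∧ ∀ j ∈ A, j ≤ a :=
    ⟨A.max' hAne, A.max'_mem hAne, fun j hj => A.le_max' j hj⟩
  have ham : a ≤ m := by
    have := (Finset.mem_filter.mp haA).1
    simp only [Finset.mem_range] at this; omega
  have hgaL : g a ≤ L := (Finset.mem_filter.mp haA).2
  have hafter : ∀ j, a < j → j ≤ m → L < g j := by
    intro j hj1 hj2
    by_contra hcon
    push_neg at hcon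
    have : j ∈ A := by simp [hA, Finset.mem_range]; exact ⟨by omega, hcon⟩
    have := hamax j this
    omega
  have hgA : g a = L := by
    by_cases hcase : a = m
    · subst hcase; omega
    · have h1 := hafter (a + 1) (by omega) (by omega)
      have h2 := hstep a (by omega)
      omega
  set B : Finset ℕ := (Finset.range (m + 1)).filter (fun j => a ≤ j ∧ R ≤ g j) with hB
  have hBm : m ∈ B := by simp [hB, Finset.mem_range]; exact ⟨ham, hm⟩
  have hBne : B.Nonempty := ⟨m, hBm⟩
  obtain ⟨b, hbB, hbmin⟩ : ∃ b, b ∈ B ∧ ∀ j ∈ B, b ≤ j :=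
    ⟨B.min' hBne, B.min'_mem hBne, fun j hj => B.min'_le j hj⟩
  have hbm : b ≤ m := by
    have := (Finset.mem_filter.mp hbB).1
    simp only [Finset.mem_range] at this; omega
  have hab : a ≤ b := (Finset.mem_filter.mp hbB).2.1
  have hgbR : R ≤ g b := (Finset.mem_filter.mp hbB).2.2
  have hbefore : ∀ j, a ≤ j → j < b → g j < R := by
    intro j hj1 hj2
    by_contra hcon
    push_neg at hcon
    have : j ∈ B := by simp [hB, Finset.mem_range]; exact ⟨by omega, hj1, hcon⟩
    have := hbmin j this
    omega
  have hgB : g b = R := by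
    by_cases hcase : a = b
    · subst hcase; omega
    · have hb1 : a ≤ b - 1 := by omega
      have h1 := hbefore (b - 1) hb1 (by omega)
      have h2 := hstep (b - 1) (by omega)
      have : b - 1 + 1 = b := by omega
      rw [this] at h2
      omega
  refine ⟨a, b, hab, hbm, hgA, hgB, ?_⟩
  intro j hj1 hj2
  constructor
  · rcases Nat.eq_or_lt_of_le hj1 with rfl | hlt
    · omega
    · exact le_of_lt (hafter j hlt (by omega))
  · rcases Nat.eq_or_lt_of_le hj2 with rfl | hlt
    · omega
    · exact le_of_lt (hbefore j hj1 hlt)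

lemma rtg_of_path (r : Vtx → Vtx → Prop) (f : ℕ → Vtx) (a : ℕ) :
    ∀ b, a ≤ b → (∀ j, a ≤ j → j < b → r (f j) (f (j + 1))) →
      Relation.ReflTransGen r (f a) (f b) := by
  intro b
  induction b with
  | zero =>
    intro hab _
    have : a = 0 := by omega
    subst this
    exact Relation.ReflTransGen.refl
  | succ b ih =>
    intro hab h
    by_cases hab' : a ≤ b
    · exact (ih hab' (fun j h1 h2 => h j h1 (by omega))).tail (h b hab' (by omega))
    · have : a = b + 1 := by omega
      subst this
      exact Relation.ReflTransGen.refl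

end Geo
section Geo2

open Classical in
/-- The finite set of oriented edges lying inside the box. -/
noncomputable def edgesIn (a b c d : ℤ) : Finset Edge :=
  ((Finset.Icc a b ×ˢ Finset.Icc c d) ×ˢ (Finset.univ : Finset Bool)).filter
    (fun e => e.1 ∈ box a b c d ∧ tip e ∈ box a b c d)

lemma mem_edgesIn {a b c d : ℤ} {e : Edge} :
    e ∈ edgesIn a b c d ↔ e.1 ∈ box a b c d ∧ tip e ∈ box a b c d := by
  classical
  simp only [edgesIn, Finset.mem_filter, Finset.mem_product, Finset.mem_Icc, Finset.mem_univ,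
    and_true]
  constructor
  · exact fun h => h.2
  · rintro ⟨h1, h2⟩
    obtain ⟨u1, u2, u3, u4, -⟩ := id h1
    exact ⟨⟨⟨u1, u2⟩, u3, u4⟩, h1, h2⟩

lemma connIn_box_congr {a b c d : ℤ} {ω ω' : Config}
    (hag : ∀ e ∈ edgesIn a b c d, ω e = ω' e) {x y : Vtx}
    (h : ConnIn (box a b c d) ω x y) : ConnIn (box a b c d) ω' x y := by
  obtain ⟨hx, h⟩ := h
  refine ⟨hx, ?_⟩
  induction h with
  | refl => exact Relation.ReflTransGen.refl
  | @tail u v hau huv ih =>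
    have hu : u ∈ box a b c d := rtg_last_mem hau hx
    obtain ⟨bb, hopen, htip⟩ := huv.1
    have hedge : ((u, bb) : Edge) ∈ edgesIn a b c d :=
      mem_edgesIn.mpr ⟨hu, htip ▸ huv.2⟩
    exact ih.tail ⟨⟨bb, (hag _ hedge) ▸ hopen, htip⟩, huv.2⟩

lemma determines_crossedLR (a b c d : ℤ) :
    Determines (edgesIn a b c d) (fun ω => CrossedLR ω a b c d) := by
  rintro ω ω' hag ⟨x, y, hx, hy, hc⟩
  exact ⟨x, y, hx, hy, connIn_box_congr hag hc⟩

/-- Translation of edges by a vector. -/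
def trEdge (t : Vtx) (e : Edge) : Edge := (e.1 + t, e.2)

lemma trEdge_inj (t : Vtx) : Function.Injective (trEdge t) := by
  intro e1 e2 h
  simp only [trEdge, Prod.mk.injEq] at h
  exact Prod.ext (add_right_cancel h.1) h.2

lemma tip_add (x t : Vtx) (b : Bool) : tip (x + t, b) = tip (x, b) + t := by
  simp only [tip]
  exact add_right_comm x t _

lemma step_shift {t : Vtx} {ω : Config} {x y : Vtx} :
    Step (fun e => ω (trEdge t e)) x y ↔ Step ω (x + t) (y + t) := by
  constructor
  · rintro ⟨bb, hopen, rfl⟩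
    exact ⟨bb, hopen, (tip_add x t bb).symm⟩
  · rintro ⟨bb, hopen, hy⟩
    refine ⟨bb, hopen, ?_⟩
    have := hy.trans (tip_add x t bb).symm.symm
    exact add_right_cancel (by rw [hy, tip_add])

lemma mem_box_add {t : Vtx} (ht : Even (t.1 + t.2)) {v : Vtx} {a b c d : ℤ} :
    v + t ∈ box (a + t.1) (b + t.1) (c + t.2) (d + t.2) ↔ v ∈ box a b c d := by
  simp only [box, Set.mem_setOf_eq, Prod.fst_add, Prod.snd_add, Int.even_iff] at *
  omega

lemma connIn_shift {t : Vtx} (ht : Even (t.1 + t.2)) {ω : Config} {x y : Vtx} {a b c d : ℤ} :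
    ConnIn (box a b c d) (fun e => ω (trEdge t e)) x y ↔
      ConnIn (box (a + t.1) (b + t.1) (c + t.2) (d + t.2)) ω (x + t) (y + t) := by
  constructor
  · rintro ⟨hx, h⟩
    refine ⟨(mem_box_add ht).mpr hx, ?_⟩
    refine Relation.ReflTransGen.lift (fun v => v + t) ?_ _ _ h
    rintro u v ⟨hs, hv⟩
    exact ⟨step_shift.mp hs, (mem_box_add ht).mpr hv⟩
  · rintro ⟨hx, h⟩
    have hx' : x ∈ box a b c d := (mem_box_add ht).mp hx
    refine ⟨hx', ?_⟩
    have hlift := Relation.ReflTransGen.lift (f := fun v => v + -t)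
      (r := fun u v => Step ω u v ∧ v ∈ box (a + t.1) (b + t.1) (c + t.2) (d + t.2))
      (p := fun u v => Step (fun e => ω (trEdge t e)) u v ∧ v ∈ box a b c d) ?_ _ _ h
    · simpa [Function.onFun] using hlift
    · rintro u v ⟨hs, hv⟩
      constructor
      · apply step_shift.mpr
        simpa using hs
      · have : v + -t + t = v := by abel
        rw [← this] at hv
        exact (mem_box_add ht).mp hv

lemma crossedLR_shift {t : Vtx} (ht : Even (t.1 + t.2)) {ω : Config} {a b c d : ℤ} :
    CrossedLR (fun e => ω (trEdge t e)) a b c d ↔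
      CrossedLR ω (a + t.1) (b + t.1) (c + t.2) (d + t.2) := by
  constructor
  · rintro ⟨x, y, hx, hy, hc⟩
    exact ⟨x + t, y + t, by simp [hx], by simp [hy], (connIn_shift ht).mp hc⟩
  · rintro ⟨x, y, hx, hy, hc⟩
    refine ⟨x - t, y - t, by simp [hx], by simp [hy], ?_⟩
    apply (connIn_shift ht).mpr
    simpa using hc

end Geo2
section Geo3

lemma crossedLR_up {ω : Config} {s n r : ℤ} (hr0 : 0 ≤ r) (hr1 : r ≤ 1)
    (h : CrossedLR ω 0 s (-r) (n - r)) : CrossedLR ω 0 s 0 n := by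
  obtain ⟨x, y, hx, hy, hxS, hrtg⟩ := h
  have hxbox : x ∈ box 0 s 0 n := by
    obtain ⟨b1, b2, b3, b4, b5⟩ := hxS
    have hxeven : Even x.2 := by
      have : Even (x.1 + x.2) := b5
      rw [hx] at this
      simpa using this
    rw [Int.even_iff] at hxeven
    exact ⟨b1, b2, by omega, by omega, b5⟩
  refine ⟨x, y, hx, hy, hxbox, ?_⟩
  clear hy hx
  induction hrtg with
  | refl => exact Relation.ReflTransGen.refl
  | @tail u v hau huv ih =>
    have hu : u ∈ box 0 s 0 n := rtg_last_mem (ih) hxbox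
    obtain ⟨c1, c2, c3, c4, c5⟩ := huv.2
    have hstep := step_facts huv.1
    have hu2 : (0:ℤ) ≤ u.2 := hu.2.2.1
    refine (ih).tail ⟨huv.1, c1, c2, by omega, by omega, c5⟩

lemma disjoint_edgesIn {s n : ℤ} {A B : ℤ} (hAB : A + s ≤ B) :
    Disjoint (edgesIn A (A + s) 0 n) (edgesIn B (B + s) 0 n) := by
  rw [Finset.disjoint_left]
  intro e heA heB
  rw [mem_edgesIn] at heA heB
  obtain ⟨⟨a1, a2, -⟩, ⟨a3, a4, -⟩⟩ := heA
  obtain ⟨⟨b1, b2, -⟩, ⟨b3, b4, -⟩⟩ := heB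
  have htip : (tip e).1 = e.1.1 + 1 ∨ (tip e).1 = e.1.1 - 1 := by
    rcases e with ⟨v, bb⟩
    cases bb <;> simp [tip] <;> omega
  omega

/-- `Rge` forces a left-right crossing of each translated box. -/
lemma rge_forces {ω : Config} {k s n : ℕ} (hω : Rge ω (n : ℤ) ((k * s : ℕ) : ℤ))
    {i : ℕ} (hi : i < k) :
    CrossedLR ω ((i : ℤ) * s) ((i : ℤ) * s + s) 0 (n : ℤ) := by
  obtain ⟨x0, y0, hEv, hy0, hx0, hconn⟩ := hω
  obtain ⟨m, f, h0, hm, hsteps⟩ := conn_path hconn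
  have hsnd : ∀ j ≤ m, (f j).2 = (j : ℤ) := by
    intro j hj
    induction j with
    | zero => rw [h0]; simp
    | succ j ih =>
      have := (step_facts (hsteps j (by omega))).1
      rw [ih (by omega)] at this
      rw [this]
      push_cast
      ring
  have hmn : (m : ℤ) = (n : ℤ) := by
    have := hsnd m le_rfl
    rw [hm] at this
    exact this.symm
  have hpar : ∀ j ≤ m, Even ((f j).1 + (f j).2) := by
    intro j hj
    induction j with
    | zero => rw [h0]; simpa using hEv
    | succ j ih =>
      exact step_even (hsteps j (by omega)) (ih (by omega))
  set L : ℤ := (i : ℤ) * s with hL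
  have hstep' : ∀ j < m, (f (j + 1)).1 = (f j).1 + 1 ∨ (f (j + 1)).1 = (f j).1 - 1 :=
    fun j hj => (step_facts (hsteps j hj)).2
  have hsnn : (0 : ℤ) ≤ (s : ℤ) := Int.natCast_nonneg s
  have hg0 : (f 0).1 ≤ L := by
    rw [h0]
    have : (0:ℤ) ≤ L := mul_nonneg (Int.natCast_nonneg i) hsnn
    simpa using (le_trans hy0 this)
  have hgm : L + s ≤ (f m).1 := by
    rw [hm]
    have h1 : ((i : ℤ) + 1) * s ≤ (k : ℤ) * s := by
      have : (i : ℤ) + 1 ≤ (k : ℤ) := by exact_mod_cast hi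
      exact mul_le_mul_of_nonneg_right this hsnn
    have h2 : ((k * s : ℕ) : ℤ) = (k : ℤ) * s := by push_cast; ring
    show L + s ≤ x0
    rw [h2] at hx0
    nlinarith [hx0, h1]
  obtain ⟨a, b, hab, hbm, hga, hgb, hbnd⟩ :=
    exists_cross (fun j => (f j).1) m hstep' L (L + s) (by omega) hg0 hgm
  have hmem : ∀ j, a ≤ j → j ≤ b → f j ∈ box L (L + s) 0 (n : ℤ) := by
    intro j hj1 hj2
    obtain ⟨u1, u2⟩ := hbnd j hj1 hj2
    have hj2' : (f j).2 = (j : ℤ) := hsnd j (by omega)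
    refine ⟨u1, u2, by omega, ?_, hpar j (by omega)⟩
    rw [hj2', ← hmn]
    exact_mod_cast (by omega : j ≤ m)
  refine ⟨f a, f b, hga, hgb, hmem a le_rfl hab, ?_⟩
  refine rtg_of_path _ f a b hab ?_
  intro j hj1 hj2
  exact ⟨hsteps j (by omega), hmem (j + 1) (by omega) (by omega)⟩

end Geo3
/-- `P_p(R_n ≥ k·s) ≤ H_p(s,n)^k`: the event `R_n ≥ ks` forces
`k` disjoint (hence independent) left-right crossings of translates of
`[0,s] × [0,n]`. -/
theorem rightmost_point_upper_tail (μ : Measure Config) (p : ℝ) (hB : IsBernoulli μ p)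
    (k s n : ℕ) (hk : 1 ≤ k) (hs : 1 ≤ s) (hn : 1 ≤ n) :
    (μ {ω | Rge ω (n : ℤ) ((k * s : ℕ) : ℤ)}).toReal ≤ H μ s n ^ k := by
  classical
  haveI hprob : IsProbabilityMeasure μ := hB.1
  have hd : ∀ i : ℕ, Determines (edgesIn ((i : ℤ) * s) ((i : ℤ) * s + s) 0 (n : ℤ))
      (fun ω => CrossedLR ω ((i : ℤ) * s) ((i : ℤ) * s + s) 0 (n : ℤ)) :=
    fun i => determines_crossedLR _ _ _ _
  have hdisj : ∀ i j : ℕ, i < j →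
      Disjoint (edgesIn ((i : ℤ) * s) ((i : ℤ) * s + s) 0 (n : ℤ))
        (edgesIn ((j : ℤ) * s) ((j : ℤ) * s + s) 0 (n : ℤ)) := by
    intro i j hij
    apply disjoint_edgesIn
    have h1 : (i : ℤ) + 1 ≤ (j : ℤ) := by exact_mod_cast hij
    nlinarith [Int.natCast_nonneg s]
  have hsub : {ω : Config | Rge ω (n : ℤ) ((k * s : ℕ) : ℤ)}
      ⊆ {ω : Config | ∀ i < k, CrossedLR ω ((i : ℤ) * s) ((i : ℤ) * s + s) 0 (n : ℤ)} :=
    fun ω hω i hi => rge_forces hω hi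
  have step1 : (μ {ω | Rge ω (n : ℤ) ((k * s : ℕ) : ℤ)}).toReal
      ≤ (μ {ω : Config | ∀ i < k, CrossedLR ω ((i : ℤ) * s) ((i : ℤ) * s + s) 0 (n : ℤ)}).toReal :=
    ENNReal.toReal_mono (measure_ne_top μ _) (measure_mono hsub)
  have step2 := indep_many μ p hB
    (fun i ω => CrossedLR ω ((i : ℤ) * s) ((i : ℤ) * s + s) 0 (n : ℤ))
    (fun i => edgesIn ((i : ℤ) * s) ((i : ℤ) * s + s) 0 (n : ℤ)) hd hdisj k
  have step3 : ∀ i : ℕ,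
      (μ {ω | CrossedLR ω ((i : ℤ) * s) ((i : ℤ) * s + s) 0 (n : ℤ)}).toReal ≤ H μ s n := by
    intro i
    set c : ℤ := (i : ℤ) * s with hc
    set r : ℤ := if Even c then 0 else 1 with hr
    have hr0 : 0 ≤ r := by rw [hr]; split <;> omega
    have hr1 : r ≤ 1 := by rw [hr]; split <;> omega
    have hrt : Even (c + r) := by
      rcases Int.even_or_odd c with h | h
      · have : r = 0 := by rw [hr, if_pos h]
        rw [this, add_zero]; exact h
      · have hne : ¬ Even c := Int.not_even_iff_odd.mpr h
        have : r = 1 := by rw [hr, if_neg hne]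
        rw [this]
        rw [Int.even_iff]
        rw [Int.odd_iff] at h
        omega
    have hrt' : Even (((c, r) : Vtx).1 + ((c, r) : Vtx).2) := hrt
    have harg : ∀ ω : Config, CrossedLR ω (0 + (c, r).1) ((s : ℤ) + (c, r).1)
        (-r + (c, r).2) (((n : ℤ) - r) + (c, r).2) ↔ CrossedLR ω c (c + s) 0 (n : ℤ) := by
      intro ω
      have e1 : (0 : ℤ) + (c, r).1 = c := by simp
      have e2 : (s : ℤ) + (c, r).1 = c + s := by simp [add_comm]
      have e3 : -r + ((c, r) : Vtx).2 = 0 := by simp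
      have e4 : ((n : ℤ) - r) + ((c, r) : Vtx).2 = (n : ℤ) := by simp
      rw [e1, e2, e3, e4]
    have hset : {ω : Config | CrossedLR ω ((i : ℤ) * s) ((i : ℤ) * s + s) 0 (n : ℤ)}
        = {ω : Config | (fun ω' => CrossedLR ω' 0 (s : ℤ) (-r) ((n : ℤ) - r))
            (fun e => ω (trEdge (c, r) e))} := by
      ext ω
      simp only [Set.mem_setOf_eq]
      rw [crossedLR_shift hrt', harg ω, ← hc]
    rw [hset, prob_map μ p hB (edgesIn 0 (s : ℤ) (-r) ((n : ℤ) - r))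
      (fun ω' => CrossedLR ω' 0 (s : ℤ) (-r) ((n : ℤ) - r))
      (determines_crossedLR _ _ _ _) (trEdge (c, r)) (trEdge_inj _)]
    exact ENNReal.toReal_mono (measure_ne_top μ _)
      (measure_mono (fun ω h => crossedLR_up hr0 hr1 h))
  calc (μ {ω | Rge ω (n : ℤ) ((k * s : ℕ) : ℤ)}).toReal
      ≤ (μ {ω : Config | ∀ i < k, CrossedLR ω ((i : ℤ) * s) ((i : ℤ) * s + s) 0 (n : ℤ)}).toReal :=
        step1
    _ = ∏ i ∈ Finset.range k,
        (μ {ω | CrossedLR ω ((i : ℤ) * s) ((i : ℤ) * s + s) 0 (n : ℤ)}).toReal := step2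
    _ ≤ ∏ i ∈ Finset.range k, H μ s n :=
        Finset.prod_le_prod (fun i _ => ENNReal.toReal_nonneg) (fun i _ => step3 i)
    _ = H μ s n ^ k := by rw [Finset.prod_const, Finset.card_range]

end OrientedPerc
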